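/- Let n_x, n_y ≥ 2, N = n_x + n_y, fix real data vectors x and y with sample means x̄, ȳ, and fix m with 1 ≤ m ≤ min(n_x, n_y). Let π be uniform on Π(m) and let W(π) = Σ_j δ_{y,j} y_j − Σ_i δ_{x,i} x_i. Then Var(W) = m (n_y − m)/((n_y − 1) n_y) Σ_j (y_j − ȳ)² + m (n_x − m)/((n_x − 1) n_x) Σ_i (x_i − x̄)²; that is, the variance of W equals the sum of the variances of its two exchange sums. -/

import Mathlib

set_option maxHeartbeats 1000000


open Finset

/-- Distance between a permutation and the observed ordering: the number of the
first `nx` indices that `π` maps outside the first `nx` positions. -/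
def pdist (nx ny : ℕ) (π : Equiv.Perm (Fin (nx + ny))) : ℕ :=
  nx - (Finset.univ.filter (fun i : Fin nx => ((π (Fin.castAdd ny i)) : ℕ) < nx)).card

/-- The partition `Π(m)`: the set of permutations at distance `m`. -/
def PartM (nx ny m : ℕ) : Finset (Equiv.Perm (Fin (nx + ny))) :=
  Finset.univ.filter (fun π => pdist nx ny π = m)

/-- Expectation of `f` under the uniform distribution on a finite set `s`. -/
noncomputable def uexp {α : Type*} (s : Finset α) (f : α → ℝ) : ℝ :=
  (∑ a ∈ s, f a) / s.card

/-- Variance of `f` under the uniform distribution on a finite set `s`. -/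
noncomputable def fvar {α : Type*} (s : Finset α) (f : α → ℝ) : ℝ :=
  uexp s (fun a => (f a - uexp s f) ^ 2)

/-- Covariance of `f` and `g` under the uniform distribution on a finite set `s`. -/
noncomputable def fcov {α : Type*} (s : Finset α) (f g : α → ℝ) : ℝ :=
  uexp s (fun a => (f a - uexp s f) * (g a - uexp s g))

/-- Indicator that observation `i` of group x is exchanged out of group x under `π`. -/
def deltaX (nx ny : ℕ) (π : Equiv.Perm (Fin (nx + ny))) (i : Fin nx) : ℝ :=
  if nx ≤ ((π (Fin.castAdd ny i)) : ℕ) then 1 else 0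

/-- Indicator that observation `j` of group y is exchanged into group x under `π`. -/
def deltaY (nx ny : ℕ) (π : Equiv.Perm (Fin (nx + ny))) (j : Fin ny) : ℝ :=
  if ((π (Fin.natAdd nx j)) : ℕ) < nx then 1 else 0

/-- Sum of the x-observations exchanged out of group x. -/
noncomputable def Wx (nx ny : ℕ) (x : Fin nx → ℝ) (π : Equiv.Perm (Fin (nx + ny))) : ℝ :=
  ∑ i : Fin nx, deltaX nx ny π i * x i

/-- Sum of the y-observations exchanged into group x. -/
noncomputable def Wy (nx ny : ℕ) (y : Fin ny → ℝ) (π : Equiv.Perm (Fin (nx + ny))) : ℝ :=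
  ∑ j : Fin ny, deltaY nx ny π j * y j

/-- Mean of the first `nx` entries of the permuted dataset `z*` (where `z*_{π i} = z i`). -/
noncomputable def xstar (nx ny : ℕ) (z : Fin (nx + ny) → ℝ) (π : Equiv.Perm (Fin (nx + ny))) : ℝ :=
  (∑ i : Fin nx, z (π.symm (Fin.castAdd ny i))) / nx

/-- Mean of the last `ny` entries of the permuted dataset `z*` (where `z*_{π i} = z i`). -/
noncomputable def ystar (nx ny : ℕ) (z : Fin (nx + ny) → ℝ) (π : Equiv.Perm (Fin (nx + ny))) : ℝ :=
  (∑ j : Fin ny, z (π.symm (Fin.natAdd nx j))) / ny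

/-- `W(π) = W_y(π) - W_x(π)` computed from the pooled data `z`. -/
noncomputable def WZ (nx ny : ℕ) (z : Fin (nx + ny) → ℝ) (π : Equiv.Perm (Fin (nx + ny))) : ℝ :=
  (∑ j : Fin ny, deltaY nx ny π j * z (Fin.natAdd nx j))
    - (∑ i : Fin nx, deltaX nx ny π i * z (Fin.castAdd ny i))

lemma exists_perm_maps {α : Type*} [Fintype α] [DecidableEq α] (s t : Finset α)
    (h : s.card = t.card) : ∃ π : Equiv.Perm α, ∀ a, π a ∈ t ↔ a ∈ s := by
  have hc : sᶜ.card = tᶜ.card := by simp [Finset.card_compl, h]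
  let e : {x // x ∈ s} ≃ {x // x ∈ t} := Finset.equivOfCardEq h
  let f0 : {x // x ∈ sᶜ} ≃ {x // x ∈ tᶜ} := Finset.equivOfCardEq hc
  let f : {x // ¬ x ∈ s} ≃ {x // ¬ x ∈ t} :=
    ((Equiv.subtypeEquivRight (fun x => (Finset.mem_compl).symm)).trans f0).trans
      (Equiv.subtypeEquivRight (fun x => Finset.mem_compl))
  refine ⟨Equiv.subtypeCongr e f, fun a => ?_⟩
  by_cases ha : a ∈ s
  · simp only [Equiv.subtypeCongr, Equiv.trans_apply, Equiv.sumCompl_symm_apply_of_pos ha,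
      Equiv.sumCongr_apply, Sum.map_inl, Equiv.sumCompl_apply_inl]
    exact iff_of_true (e ⟨a, ha⟩).2 ha
  · simp only [Equiv.subtypeCongr, Equiv.trans_apply, Equiv.sumCompl_symm_apply_of_neg ha,
      Equiv.sumCongr_apply, Sum.map_inr, Equiv.sumCompl_apply_inr]
    exact iff_of_false (f ⟨a, ha⟩).2 ha

def Aset (nx ny : ℕ) (π : Equiv.Perm (Fin (nx + ny))) : Finset (Fin nx) :=
  Finset.univ.filter (fun i => nx ≤ ((π (Fin.castAdd ny i)) : ℕ))


def Bset (nx ny : ℕ) (π : Equiv.Perm (Fin (nx + ny))) : Finset (Fin ny) :=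
  Finset.univ.filter (fun j => ((π (Fin.natAdd nx j)) : ℕ) < nx)


lemma pdist_eq_cardA (nx ny : ℕ) (π : Equiv.Perm (Fin (nx + ny))) :
    pdist nx ny π = (Aset nx ny π).card := by
  have h := Finset.card_filter_add_card_filter_not
    (s := (univ : Finset (Fin nx))) (p := fun i => ((π (Fin.castAdd ny i)) : ℕ) < nx)
  have h2 : (Finset.univ.filter (fun i : Fin nx => ¬ ((π (Fin.castAdd ny i)) : ℕ) < nx))
      = Aset nx ny π := by
    simp [Aset, not_lt]
  rw [h2] at h
  simp only [Finset.card_univ, Fintype.card_fin] at h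
  unfold pdist
  omega


lemma card_filter_lt_perm (nx ny : ℕ) (π : Equiv.Perm (Fin (nx + ny))) :
    (Finset.univ.filter (fun u : Fin (nx + ny) => ((π u : ℕ) < nx))).card = nx := by
  have h1 : (Finset.univ.filter (fun u : Fin (nx + ny) => ((π u : ℕ) < nx))).card
      = (Finset.univ.filter (fun u : Fin (nx + ny) => ((u : ℕ) < nx))).card := by
    apply Finset.card_bij (fun u _ => π u)
    · intro a ha; simp at ha ⊢; exact ha
    · intro a _ b _ h; exact π.injective h
    · intro b hb; exact ⟨π.symm b, by simpa using hb, by simp⟩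
  rw [h1, Finset.card_filter, Fin.sum_univ_add]
  simp


lemma cardB_eq_cardA (nx ny : ℕ) (π : Equiv.Perm (Fin (nx + ny))) :
    (Bset nx ny π).card = (Aset nx ny π).card := by
  have h := card_filter_lt_perm nx ny π
  rw [Finset.card_filter, Fin.sum_univ_add] at h
  have hA : (Aset nx ny π).card + (Finset.univ.filter
      (fun i : Fin nx => ((π (Fin.castAdd ny i)) : ℕ) < nx)).card = nx := by
    have := Finset.card_filter_add_card_filter_not
      (s := (univ : Finset (Fin nx))) (p := fun i => ((π (Fin.castAdd ny i)) : ℕ) < nx)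
    simp only [Finset.card_univ, Fintype.card_fin] at this
    have h2 : (Finset.univ.filter (fun i : Fin nx => ¬ ((π (Fin.castAdd ny i)) : ℕ) < nx))
        = Aset nx ny π := by simp [Aset, not_lt]
    rw [h2] at this
    omega
  have hB : (Bset nx ny π).card = ∑ j : Fin ny, if ((π (Fin.natAdd nx j) : ℕ) < nx) then 1 else 0 :=
    Finset.card_filter _ _
  have hk : (Finset.univ.filter (fun i : Fin nx => ((π (Fin.castAdd ny i)) : ℕ) < nx)).card
      = ∑ i : Fin nx, if ((π (Fin.castAdd ny i) : ℕ) < nx) then 1 else 0 :=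
    Finset.card_filter _ _
  omega

lemma exists_base (nx ny m : ℕ) (hm : m ≤ nx) (A : Finset (Fin nx)) (B : Finset (Fin ny))
    (hA : A.card = m) (hB : B.card = m) :
    ∃ π : Equiv.Perm (Fin (nx + ny)), Aset nx ny π = A ∧ Bset nx ny π = B := by
  classical
  set s : Finset (Fin (nx + ny)) :=
    ((univ \ A).map (Fin.castAddEmb ny)) ∪ (B.map (Fin.natAddEmb nx)) with hs
  set t : Finset (Fin (nx + ny)) := univ.filter (fun u => (u : ℕ) < nx) with ht
  have hdisj : Disjoint ((univ \ A).map (Fin.castAddEmb ny)) (B.map (Fin.natAddEmb nx)) := by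
    rw [Finset.disjoint_left]
    rintro a ha hb
    simp only [Finset.mem_map] at ha hb
    obtain ⟨i, _, hi⟩ := ha
    obtain ⟨j, _, hj⟩ := hb
    rw [← hj] at hi
    have : (i : ℕ) = nx + j := by
      simpa [Fin.castAddEmb, Fin.natAddEmb_apply, Fin.ext_iff] using hi
    have := i.isLt
    omega
  have hscard : s.card = nx := by
    rw [hs, Finset.card_union_of_disjoint hdisj, Finset.card_map, Finset.card_map,
      Finset.card_sdiff_of_subset (Finset.subset_univ _), Finset.card_univ, Fintype.card_fin, hA, hB]
    omega
  have htcard : t.card = nx := by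
    rw [ht, Finset.card_filter, Fin.sum_univ_add]
    simp
  obtain ⟨π, hπ⟩ := exists_perm_maps s t (by omega)
  have hmem_t : ∀ u : Fin (nx + ny), u ∈ t ↔ (u : ℕ) < nx := by
    intro u; simp [ht]
  have hcast : ∀ i : Fin nx, (Fin.castAdd ny i ∈ s ↔ i ∉ A) := by
    intro i
    simp only [hs, Finset.mem_union, Finset.mem_map, Finset.mem_sdiff, Finset.mem_univ,
      true_and]
    constructor
    · rintro (⟨i', hi', h⟩ | ⟨j, _, h⟩)
      · have : i' = i := by
          simpa [Fin.castAddEmb, Fin.ext_iff] using h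
        rwa [this] at hi'
      · exfalso
        have : (nx : ℕ) + j = (i : ℕ) := by
          simpa [Fin.natAddEmb_apply, Fin.ext_iff] using h
        have := i.isLt; omega
    · intro h; exact Or.inl ⟨i, h, rfl⟩
  have hnat : ∀ j : Fin ny, (Fin.natAdd nx j ∈ s ↔ j ∈ B) := by
    intro j
    simp only [hs, Finset.mem_union, Finset.mem_map, Finset.mem_sdiff, Finset.mem_univ,
      true_and]
    constructor
    · rintro (⟨i, _, h⟩ | ⟨j', hj', h⟩)
      · exfalso
        have : (i : ℕ) = nx + j := by
          simpa [Fin.castAddEmb, Fin.ext_iff] using h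
        have := i.isLt; omega
      · have : j' = j := by
          simpa [Fin.natAddEmb_apply, Fin.ext_iff] using h
        rwa [this] at hj'
    · intro h; exact Or.inr ⟨j, h, rfl⟩
  refine ⟨π, ?_, ?_⟩
  · ext i
    simp only [Aset, Finset.mem_filter, Finset.mem_univ, true_and]
    rw [← not_lt, ← hmem_t, hπ, hcast, not_not]
  · ext j
    simp only [Bset, Finset.mem_filter, Finset.mem_univ, true_and]
    rw [← hmem_t, hπ, hnat]

def blockPerm (nx ny : ℕ) (σ : Equiv.Perm (Fin nx)) (τ : Equiv.Perm (Fin ny)) :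
    Equiv.Perm (Fin (nx + ny)) :=
  (finSumFinEquiv.symm.trans ((Equiv.sumCongr σ τ).trans finSumFinEquiv))

@[simp] lemma blockPerm_castAdd (nx ny : ℕ) (σ : Equiv.Perm (Fin nx)) (τ : Equiv.Perm (Fin ny))
    (i : Fin nx) : blockPerm nx ny σ τ (Fin.castAdd ny i) = Fin.castAdd ny (σ i) := by
  simp [blockPerm]

@[simp] lemma blockPerm_natAdd (nx ny : ℕ) (σ : Equiv.Perm (Fin nx)) (τ : Equiv.Perm (Fin ny))
    (j : Fin ny) : blockPerm nx ny σ τ (Fin.natAdd nx j) = Fin.natAdd nx (τ j) := by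
  simp [blockPerm]

lemma castAdd_mk (nx ny : ℕ) (w : Fin (nx + ny)) (p : (w : ℕ) < nx) :
    Fin.castAdd ny (⟨(w : ℕ), p⟩ : Fin nx) = w := by
  apply Fin.ext; simp

lemma natAdd_mk (nx ny : ℕ) (w : Fin (nx + ny)) (p : nx ≤ (w : ℕ)) (q : (w : ℕ) - nx < ny) :
    Fin.natAdd nx (⟨(w : ℕ) - nx, q⟩ : Fin ny) = w := by
  apply Fin.ext; simp; omega

lemma blockPerm_lt_iff (nx ny : ℕ) (σ : Equiv.Perm (Fin nx)) (τ : Equiv.Perm (Fin ny))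
    (u : Fin (nx + ny)) : ((blockPerm nx ny σ τ u : ℕ) < nx) ↔ ((u : ℕ) < nx) := by
  induction u using Fin.addCases with
  | left i => simp [(σ i).isLt, i.isLt]
  | right j => simp

lemma exists_block (nx ny : ℕ) (ρ : Equiv.Perm (Fin (nx + ny)))
    (h : ∀ u : Fin (nx + ny), ((ρ u : ℕ) < nx ↔ (u : ℕ) < nx)) :
    ∃ (σ : Equiv.Perm (Fin nx)) (τ : Equiv.Perm (Fin ny)), blockPerm nx ny σ τ = ρ := by
  have hinv : ∀ u : Fin (nx + ny), ((ρ⁻¹ u : ℕ) < nx ↔ (u : ℕ) < nx) := by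
    intro u
    conv_rhs => rw [← (Equiv.apply_symm_apply ρ u : ρ (ρ⁻¹ u) = u)]
    exact (h _).symm
  have hx : ∀ i : Fin nx, ((ρ (Fin.castAdd ny i) : ℕ) < nx) := by
    intro i; rw [h]; simpa using i.isLt
  have hxinv : ∀ i : Fin nx, ((ρ⁻¹ (Fin.castAdd ny i) : ℕ) < nx) := by
    intro i; rw [hinv]; simpa using i.isLt
  have hy : ∀ j : Fin ny, nx ≤ (ρ (Fin.natAdd nx j) : ℕ) ∧ (ρ (Fin.natAdd nx j) : ℕ) - nx < ny := by
    intro j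
    have h1 := (h (Fin.natAdd nx j))
    have h2 := (ρ (Fin.natAdd nx j)).isLt
    simp only [Fin.coe_natAdd] at h1
    omega
  have hyinv : ∀ j : Fin ny, nx ≤ (ρ⁻¹ (Fin.natAdd nx j) : ℕ) ∧
      (ρ⁻¹ (Fin.natAdd nx j) : ℕ) - nx < ny := by
    intro j
    have h1 := (hinv (Fin.natAdd nx j))
    have h2 := (ρ⁻¹ (Fin.natAdd nx j)).isLt
    simp only [Fin.coe_natAdd] at h1
    omega
  refine ⟨⟨fun i => ⟨(ρ (Fin.castAdd ny i) : ℕ), hx i⟩,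
           fun i => ⟨(ρ⁻¹ (Fin.castAdd ny i) : ℕ), hxinv i⟩, ?_, ?_⟩,
          ⟨fun j => ⟨(ρ (Fin.natAdd nx j) : ℕ) - nx, (hy j).2⟩,
           fun j => ⟨(ρ⁻¹ (Fin.natAdd nx j) : ℕ) - nx, (hyinv j).2⟩, ?_, ?_⟩, ?_⟩
  · intro i
    apply Fin.ext
    simp only []
    rw [castAdd_mk _ _ _ (hx i), (id (Equiv.symm_apply_apply ρ _) : ρ⁻¹ (ρ _) = _)]
    simp
  · intro i
    apply Fin.ext
    simp only []
    rw [castAdd_mk _ _ _ (hxinv i), (id (Equiv.apply_symm_apply ρ _) : ρ (ρ⁻¹ _) = _)]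
    simp
  · intro j
    apply Fin.ext
    simp only []
    rw [natAdd_mk _ _ _ (hy j).1 (hy j).2, (id (Equiv.symm_apply_apply ρ _) : ρ⁻¹ (ρ _) = _)]
    simp
  · intro j
    apply Fin.ext
    simp only []
    rw [natAdd_mk _ _ _ (hyinv j).1 (hyinv j).2, (id (Equiv.apply_symm_apply ρ _) : ρ (ρ⁻¹ _) = _)]
    simp
  · apply Equiv.ext
    intro u
    induction u using Fin.addCases with
    | left i =>
        rw [blockPerm_castAdd]
        exact castAdd_mk _ _ _ (hx i)
    | right j =>
        rw [blockPerm_natAdd]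
        exact natAdd_mk _ _ _ (hy j).1 (hy j).2

lemma same_sets_iff (nx ny : ℕ) (π π' : Equiv.Perm (Fin (nx + ny)))
    (hA : Aset nx ny π = Aset nx ny π') (hB : Bset nx ny π = Bset nx ny π') :
    ∀ v : Fin (nx + ny), ((π v : ℕ) < nx ↔ (π' v : ℕ) < nx) := by
  intro v
  induction v using Fin.addCases with
  | left i =>
      have := Finset.ext_iff.mp hA i
      simp only [Aset, Finset.mem_filter, Finset.mem_univ, true_and] at this
      omega
  | right j =>
      have := Finset.ext_iff.mp hB j
      simp only [Bset, Finset.mem_filter, Finset.mem_univ, true_and] at this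
      omega



lemma Aset_mul_block (nx ny : ℕ) (σ : Equiv.Perm (Fin nx)) (τ : Equiv.Perm (Fin ny))
    (π : Equiv.Perm (Fin (nx + ny))) :
    Aset nx ny (blockPerm nx ny σ τ * π) = Aset nx ny π ∧
    Bset nx ny (blockPerm nx ny σ τ * π) = Bset nx ny π := by
  constructor <;> ext u <;>
    simp only [Aset, Bset, Finset.mem_filter, Finset.mem_univ, true_and,
      Equiv.Perm.mul_apply, ← not_lt, blockPerm_lt_iff]



lemma fiber_card (nx ny m : ℕ) (hm : m ≤ nx) (A : Finset (Fin nx)) (B : Finset (Fin ny))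
    (hA : A.card = m) (hB : B.card = m) :
    ((PartM nx ny m).filter
      (fun π => Aset nx ny π = A ∧ Bset nx ny π = B)).card = Nat.factorial nx * Nat.factorial ny := by
  classical
  obtain ⟨π₀, hA0, hB0⟩ := exists_base nx ny m hm A B hA hB
  have hmemP : ∀ π : Equiv.Perm (Fin (nx + ny)), Aset nx ny π = A → π ∈ PartM nx ny m := by
    intro π h
    simp only [PartM, Finset.mem_filter, Finset.mem_univ, true_and, pdist_eq_cardA, h, hA]
  have hcard : ((univ : Finset (Equiv.Perm (Fin nx) × Equiv.Perm (Fin ny)))).card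
      = ((PartM nx ny m).filter
          (fun π => Aset nx ny π = A ∧ Bset nx ny π = B)).card := by
    apply Finset.card_bij (fun p _ => blockPerm nx ny p.1 p.2 * π₀)
    · intro p _
      obtain ⟨h1, h2⟩ := Aset_mul_block nx ny p.1 p.2 π₀
      rw [Finset.mem_filter]
      exact ⟨hmemP _ (h1.trans hA0), h1.trans hA0, h2.trans hB0⟩
    · intro p _ q _ h
      have h' : blockPerm nx ny p.1 p.2 = blockPerm nx ny q.1 q.2 := mul_right_cancel h
      have h1 : p.1 = q.1 := by
        apply Equiv.ext; intro i
        have := congrArg (fun f => (f (Fin.castAdd ny i) : ℕ)) h'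
        simp only [blockPerm_castAdd, Fin.coe_castAdd] at this
        exact Fin.ext this
      have h2 : p.2 = q.2 := by
        apply Equiv.ext; intro j
        have := congrArg (fun f => (f (Fin.natAdd nx j) : ℕ)) h'
        simp only [blockPerm_natAdd, Fin.coe_natAdd] at this
        exact Fin.ext (by omega)
      exact Prod.ext h1 h2
    · intro π hπ
      rw [Finset.mem_filter] at hπ
      obtain ⟨-, hπA, hπB⟩ := hπ
      have hiff : ∀ u : Fin (nx + ny), (((π * π₀⁻¹) u : ℕ) < nx ↔ (u : ℕ) < nx) := by
        intro u
        have := same_sets_iff nx ny π π₀ (hπA.trans hA0.symm) (hπB.trans hB0.symm) (π₀⁻¹ u)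
        simp only [Equiv.Perm.mul_apply]
        rw [this, (id (Equiv.apply_symm_apply π₀ u) : π₀ (π₀⁻¹ u) = u)]
      obtain ⟨σ, τ, hστ⟩ := exists_block nx ny (π * π₀⁻¹) hiff
      refine ⟨(σ, τ), Finset.mem_univ _, ?_⟩
      simp only [hστ, inv_mul_cancel_right, mul_inv_cancel_right]
  rw [← hcard]
  simp [Fintype.card_perm]

lemma card_filter_mem {α : Type*} [DecidableEq α] (t : Finset α) (a : α) (ha : a ∈ t)
    (m : ℕ) (hm : 1 ≤ m) :
    ((Finset.powersetCard m t).filter (fun s => a ∈ s)).card = (t.card - 1).choose (m - 1) := by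
  have : ((Finset.powersetCard m t).filter (fun s => a ∈ s)).card
      = (Finset.powersetCard (m - 1) (t.erase a)).card := by
    apply Finset.card_bij (fun s _ => s.erase a)
    · intro s hs
      simp only [Finset.mem_filter, Finset.mem_powersetCard] at hs ⊢
      exact ⟨Finset.erase_subset_erase a hs.1.1, by rw [Finset.card_erase_of_mem hs.2, hs.1.2]⟩
    · intro s hs s' hs' h
      simp only [Finset.mem_filter] at hs hs'
      rw [← Finset.insert_erase hs.2, h, Finset.insert_erase hs'.2]
    · intro u hu
      simp only [Finset.mem_powersetCard] at hu
      have hau : a ∉ u := fun h => (Finset.notMem_erase a t) (hu.1 h)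
      refine ⟨insert a u, ?_, by rw [Finset.erase_insert hau]⟩
      simp only [Finset.mem_filter, Finset.mem_powersetCard]
      refine ⟨⟨Finset.insert_subset ha (hu.1.trans (Finset.erase_subset a t)), ?_⟩,
        Finset.mem_insert_self a u⟩
      rw [Finset.card_insert_of_notMem hau, hu.2]
      omega
  rw [this, Finset.card_powersetCard, Finset.card_erase_of_mem ha]

lemma card_filter_mem_pair {α : Type*} [DecidableEq α] (t : Finset α) (a b : α) (hab : a ≠ b)
    (ha : a ∈ t) (hb : b ∈ t) (m : ℕ) (hm : 2 ≤ m) :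
    ((Finset.powersetCard m t).filter (fun s => a ∈ s ∧ b ∈ s)).card
      = (t.card - 2).choose (m - 2) := by
  have step : ((Finset.powersetCard m t).filter (fun s => a ∈ s ∧ b ∈ s)).card
      = ((Finset.powersetCard (m - 1) (t.erase a)).filter (fun s => b ∈ s)).card := by
    apply Finset.card_bij (fun s _ => s.erase a)
    · intro s hs
      simp only [Finset.mem_filter, Finset.mem_powersetCard] at hs ⊢
      exact ⟨⟨Finset.erase_subset_erase a hs.1.1, by rw [Finset.card_erase_of_mem hs.2.1, hs.1.2]⟩,
        Finset.mem_erase.mpr ⟨(Ne.symm hab), hs.2.2⟩⟩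
    · intro s hs s' hs' h
      simp only [Finset.mem_filter] at hs hs'
      rw [← Finset.insert_erase hs.2.1, h, Finset.insert_erase hs'.2.1]
    · intro u hu
      simp only [Finset.mem_filter, Finset.mem_powersetCard] at hu
      have hau : a ∉ u := fun h => (Finset.notMem_erase a t) (hu.1.1 h)
      refine ⟨insert a u, ?_, by rw [Finset.erase_insert hau]⟩
      simp only [Finset.mem_filter, Finset.mem_powersetCard]
      refine ⟨⟨Finset.insert_subset ha (hu.1.1.trans (Finset.erase_subset a t)), ?_⟩,
        Finset.mem_insert_self a u, Finset.mem_insert_of_mem hu.2⟩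
      rw [Finset.card_insert_of_notMem hau, hu.1.2]
      omega
  rw [step, card_filter_mem (t.erase a) b (Finset.mem_erase.mpr ⟨Ne.symm hab, hb⟩) (m-1)
    (by omega), Finset.card_erase_of_mem ha]
  congr 1 <;> omega

lemma card_filter_mem_pair_small {α : Type*} [DecidableEq α] (t : Finset α) (a b : α)
    (hab : a ≠ b) (m : ℕ) (hm : m < 2) :
    ((Finset.powersetCard m t).filter (fun s => a ∈ s ∧ b ∈ s)).card = 0 := by
  rw [Finset.card_eq_zero]
  rw [Finset.eq_empty_iff_forall_notMem]
  intro s hs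
  simp only [Finset.mem_filter, Finset.mem_powersetCard] at hs
  have : ({a, b} : Finset α) ⊆ s := by
    intro z hz
    simp only [Finset.mem_insert, Finset.mem_singleton] at hz
    rcases hz with rfl | rfl
    · exact hs.2.1
    · exact hs.2.2
  have h2 := Finset.card_le_card this
  rw [Finset.card_pair hab] at h2
  omega

def e2n (n m : ℕ) : ℕ := if 2 ≤ m then (n - 2).choose (m - 2) else 0


lemma pair_count (n m : ℕ) (a b : Fin n) (hab : a ≠ b) :
    ((Finset.powersetCard m (univ : Finset (Fin n))).filter
      (fun s => a ∈ s ∧ b ∈ s)).card = e2n n m := by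
  by_cases hm : 2 ≤ m
  · rw [card_filter_mem_pair univ a b hab (mem_univ a) (mem_univ b) m hm, e2n, if_pos hm,
      Finset.card_univ, Fintype.card_fin]
  · rw [card_filter_mem_pair_small univ a b hab m (by omega), e2n, if_neg hm]


lemma sum_subsets_linear (n m : ℕ) (hm : 1 ≤ m) (v : Fin n → ℝ) :
    ∑ s ∈ Finset.powersetCard m (univ : Finset (Fin n)), ∑ i ∈ s, v i
      = ((n-1).choose (m-1) : ℝ) * ∑ i, v i := by
  have hinner : ∀ s ∈ Finset.powersetCard m (univ : Finset (Fin n)),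
      ∑ i ∈ s, v i = ∑ i : Fin n, if i ∈ s then v i else 0 := by
    intro s _
    rw [← Finset.sum_filter]
    congr 1
    ext i; simp
  rw [Finset.sum_congr rfl hinner, Finset.sum_comm]
  have : ∀ i : Fin n, ∑ s ∈ Finset.powersetCard m (univ : Finset (Fin n)),
      (if i ∈ s then v i else 0) = ((n-1).choose (m-1) : ℝ) * v i := by
    intro i
    rw [Finset.sum_ite, Finset.sum_const, Finset.sum_const_zero, add_zero,
      card_filter_mem univ i (mem_univ i) m hm, Finset.card_univ, Fintype.card_fin,
      nsmul_eq_mul]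
  rw [Finset.sum_congr rfl (fun i _ => this i), ← Finset.mul_sum]


lemma sum_subsets_sq (n m : ℕ) (hm : 1 ≤ m) (v : Fin n → ℝ) :
    ∑ s ∈ Finset.powersetCard m (univ : Finset (Fin n)), (∑ i ∈ s, v i)^2
      = ((n-1).choose (m-1) : ℝ) * (∑ i, (v i)^2)
        + (e2n n m : ℝ) * ((∑ i, v i)^2 - ∑ i, (v i)^2) := by
  have hinner : ∀ s ∈ Finset.powersetCard m (univ : Finset (Fin n)),
      (∑ i ∈ s, v i)^2 = ∑ i : Fin n, ∑ j : Fin n,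
        (if i ∈ s ∧ j ∈ s then v i * v j else 0) := by
    intro s _
    have h1 : ∑ i ∈ s, v i = ∑ i : Fin n, if i ∈ s then v i else 0 := by
      rw [← Finset.sum_filter]; congr 1; ext i; simp
    rw [h1, sq, Finset.sum_mul_sum]
    congr 1; ext i; congr 1; ext j
    split_ifs with h1 h2 h3 h4 <;> simp_all
  rw [Finset.sum_congr rfl hinner, Finset.sum_comm]
  have hswap : ∀ i : Fin n, ∑ s ∈ Finset.powersetCard m (univ : Finset (Fin n)),
      ∑ j : Fin n, (if i ∈ s ∧ j ∈ s then v i * v j else 0)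
      = ∑ j : Fin n, ∑ s ∈ Finset.powersetCard m (univ : Finset (Fin n)),
        (if i ∈ s ∧ j ∈ s then v i * v j else 0) := fun i => Finset.sum_comm
  rw [Finset.sum_congr rfl (fun i _ => hswap i)]
  have hcount : ∀ i j : Fin n, ∑ s ∈ Finset.powersetCard m (univ : Finset (Fin n)),
      (if i ∈ s ∧ j ∈ s then v i * v j else 0)
      = (((Finset.powersetCard m (univ : Finset (Fin n))).filter
          (fun s => i ∈ s ∧ j ∈ s)).card : ℝ) * (v i * v j) := by
    intro i j
    rw [Finset.sum_ite, Finset.sum_const, Finset.sum_const_zero, add_zero, nsmul_eq_mul]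
  have hrow : ∀ i : Fin n, ∑ j : Fin n, ∑ s ∈ Finset.powersetCard m (univ : Finset (Fin n)),
      (if i ∈ s ∧ j ∈ s then v i * v j else 0)
      = ((n-1).choose (m-1) : ℝ) * (v i)^2
        + (e2n n m : ℝ) * (v i * ((∑ k, v k) - v i)) := by
    intro i
    rw [Finset.sum_congr rfl (fun j _ => hcount i j)]
    rw [← Finset.add_sum_erase _ _ (mem_univ i)]
    have hdiag : (((Finset.powersetCard m (univ : Finset (Fin n))).filter
        (fun s => i ∈ s ∧ i ∈ s)).card : ℝ) = ((n-1).choose (m-1) : ℝ) := by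
      have hfe : (Finset.powersetCard m (univ : Finset (Fin n))).filter
          (fun s => i ∈ s ∧ i ∈ s)
          = (Finset.powersetCard m (univ : Finset (Fin n))).filter (fun s => i ∈ s) :=
        Finset.filter_congr (fun s _ => by simp)
      norm_cast
      rw [hfe, card_filter_mem univ i (mem_univ i) m hm, Finset.card_univ, Fintype.card_fin]
    have hoff : ∀ j ∈ (univ : Finset (Fin n)).erase i,
        (((Finset.powersetCard m (univ : Finset (Fin n))).filter
          (fun s => i ∈ s ∧ j ∈ s)).card : ℝ) * (v i * v j)
        = (e2n n m : ℝ) * (v i * v j) := by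
      intro j hj
      rw [pair_count n m i j (Ne.symm (Finset.mem_erase.mp hj).1)]
    rw [Finset.sum_congr rfl hoff, hdiag, ← Finset.mul_sum, ← Finset.mul_sum,
      Finset.sum_erase_eq_sub (mem_univ i)]
    ring
  rw [Finset.sum_congr rfl (fun i _ => hrow i), Finset.sum_add_distrib,
    ← Finset.mul_sum, ← Finset.mul_sum]
  have : ∑ i, v i * ((∑ k, v k) - v i) = (∑ i, v i)^2 - ∑ i, (v i)^2 := by
    have e1 : ∀ i : Fin n, v i * ((∑ k, v k) - v i) = v i * (∑ k, v k) - (v i)^2 :=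
      fun i => by ring
    rw [Finset.sum_congr rfl (fun i _ => e1 i), Finset.sum_sub_distrib, ← Finset.sum_mul, sq]
  rw [this]

lemma choose_id1 (n m : ℕ) (hm : 1 ≤ m) (hmn : m ≤ n) :
    m * n.choose m = n * (n-1).choose (m-1) := by
  have h := Nat.add_one_mul_choose_eq (n-1) (m-1)
  have h1 : n - 1 + 1 = n := by omega
  have h2 : m - 1 + 1 = m := by omega
  simp only [Nat.succ_eq_add_one, h1, h2] at h
  rw [mul_comm m (n.choose m)]
  exact h.symm



lemma choose_id2 (n m : ℕ) (hm : 1 ≤ m) (hmn : m ≤ n) :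
    m * (m - 1) * n.choose m = n * (n-1) * e2n n m := by
  have he : 2 ≤ m → e2n n m = (n - 2).choose (m - 2) := by
    intro h; unfold e2n; rw [if_pos h]
  by_cases h2 : 2 ≤ m
  · have ha := choose_id1 n m hm hmn
    have hb := choose_id1 (n-1) (m-1) (by omega) (by omega)
    have h3 : n - 1 - 1 = n - 2 := by omega
    have h4 : m - 1 - 1 = m - 2 := by omega
    rw [h3, h4] at hb
    calc m * (m - 1) * n.choose m = (m - 1) * (m * n.choose m) := by ring
    _ = (m - 1) * (n * (n-1).choose (m-1)) := by rw [ha]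
    _ = n * ((m - 1) * (n-1).choose (m-1)) := by ring
    _ = n * ((n-1) * (n-2).choose (m-2)) := by rw [hb]
    _ = n * (n-1) * e2n n m := by rw [he h2]; ring
  · have hm1 : m = 1 := by omega
    subst hm1
    simp [e2n]



lemma subset_var (n m : ℕ) (hn : 2 ≤ n) (hm1 : 1 ≤ m) (hmn : m ≤ n) (v : Fin n → ℝ) :
    (∑ s ∈ Finset.powersetCard m (univ : Finset (Fin n)), (∑ i ∈ s, v i)^2) / (n.choose m : ℝ)
      - ((∑ s ∈ Finset.powersetCard m (univ : Finset (Fin n)), ∑ i ∈ s, v i)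
          / (n.choose m : ℝ))^2
    = (m : ℝ) * (((n : ℝ) - m)/(((n : ℝ)-1)*n)) * ∑ i, (v i - (∑ k, v k)/n)^2 := by
  have hn0 : (n : ℝ) ≠ 0 := by positivity
  have hn1 : (n : ℝ) - 1 ≠ 0 := by
    have : (2 : ℝ) ≤ n := by exact_mod_cast hn
    intro h; nlinarith
  have hc0 : (n.choose m : ℝ) ≠ 0 := by
    have := Nat.choose_pos hmn; positivity
  have r1 : (m : ℝ) * (n.choose m : ℝ) = (n : ℝ) * ((n-1).choose (m-1) : ℝ) := by
    exact_mod_cast choose_id1 n m hm1 hmn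
  have r2 : (m : ℝ) * ((m : ℝ) - 1) * (n.choose m : ℝ)
      = (n : ℝ) * ((n : ℝ) - 1) * (e2n n m : ℝ) := by
    have := choose_id2 n m hm1 hmn
    have hcast : ((m * (m-1) * n.choose m : ℕ) : ℝ) = ((n * (n-1) * e2n n m : ℕ) : ℝ) := by
      exact_mod_cast this
    push_cast [Nat.cast_sub hm1, Nat.cast_sub (by omega : 1 ≤ n)] at hcast
    linarith
  have hc1 : ((n-1).choose (m-1) : ℝ) = (m : ℝ) * (n.choose m : ℝ) / n := by
    rw [eq_div_iff hn0]; linarith [r1]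
  have he2 : (e2n n m : ℝ) = (m : ℝ) * ((m : ℝ) - 1) * (n.choose m : ℝ)
      / ((n : ℝ) * ((n : ℝ) - 1)) := by
    rw [eq_div_iff (by exact mul_ne_zero hn0 hn1)]
    linarith [r2]
  rw [sum_subsets_sq n m hm1 v, sum_subsets_linear n m hm1 v, hc1, he2]
  have hexp : ∑ i, (v i - (∑ k, v k)/n)^2
      = (∑ i, (v i)^2) - 2 * ((∑ k, v k)/n) * (∑ k, v k) + n * ((∑ k, v k)/n)^2 := by
    have e1 : ∀ i : Fin n, (v i - (∑ k, v k)/n)^2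
        = (v i)^2 - 2 * ((∑ k, v k)/n) * v i + ((∑ k, v k)/n)^2 := fun i => by ring
    rw [Finset.sum_congr rfl (fun i _ => e1 i), Finset.sum_add_distrib,
      Finset.sum_sub_distrib, ← Finset.mul_sum, Finset.sum_const, Finset.card_univ,
      Fintype.card_fin, nsmul_eq_mul]
  rw [hexp]
  field_simp
  ring

lemma key_sum (nx ny m : ℕ) (hmx : m ≤ nx)
    (F : Finset (Fin nx) → Finset (Fin ny) → ℝ) :
    ∑ π ∈ PartM nx ny m, F (Aset nx ny π) (Bset nx ny π)
      = ((Nat.factorial nx * Nat.factorial ny : ℕ) : ℝ) *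
        ∑ A ∈ Finset.powersetCard m (univ : Finset (Fin nx)),
          ∑ B ∈ Finset.powersetCard m (univ : Finset (Fin ny)), F A B := by
  classical
  have hmaps : ∀ π ∈ PartM nx ny m,
      (Aset nx ny π, Bset nx ny π) ∈
        (Finset.powersetCard m (univ : Finset (Fin nx))) ×ˢ
        (Finset.powersetCard m (univ : Finset (Fin ny))) := by
    intro π hπ
    simp only [PartM, Finset.mem_filter, Finset.mem_univ, true_and] at hπ
    rw [pdist_eq_cardA] at hπ
    rw [Finset.mem_product, Finset.mem_powersetCard_univ, Finset.mem_powersetCard_univ,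
      cardB_eq_cardA]
    exact ⟨hπ, hπ⟩
  rw [← Finset.sum_fiberwise_of_maps_to hmaps
    (fun π => F (Aset nx ny π) (Bset nx ny π))]
  have hinner : ∀ p ∈ (Finset.powersetCard m (univ : Finset (Fin nx))) ×ˢ
      (Finset.powersetCard m (univ : Finset (Fin ny))),
      ∑ π ∈ (PartM nx ny m).filter
        (fun π => (Aset nx ny π, Bset nx ny π) = p),
        F (Aset nx ny π) (Bset nx ny π)
      = ((Nat.factorial nx * Nat.factorial ny : ℕ) : ℝ) * F p.1 p.2 := by
    intro p hp
    rw [Finset.mem_product, Finset.mem_powersetCard_univ, Finset.mem_powersetCard_univ] at hp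
    have hfe : (PartM nx ny m).filter (fun π => (Aset nx ny π, Bset nx ny π) = p)
        = (PartM nx ny m).filter (fun π => Aset nx ny π = p.1 ∧ Bset nx ny π = p.2) :=
      Finset.filter_congr (fun π _ => by rw [Prod.ext_iff])
    have hconst : ∀ π ∈ (PartM nx ny m).filter
        (fun π => Aset nx ny π = p.1 ∧ Bset nx ny π = p.2),
        F (Aset nx ny π) (Bset nx ny π) = F p.1 p.2 := by
      intro π hπ
      rw [Finset.mem_filter] at hπ
      rw [hπ.2.1, hπ.2.2]
    rw [hfe, Finset.sum_congr rfl hconst, Finset.sum_const,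
      fiber_card nx ny m hmx p.1 p.2 hp.1 hp.2, nsmul_eq_mul]
  rw [Finset.sum_congr rfl hinner, ← Finset.mul_sum, Finset.sum_product]

lemma fvar_moments {α : Type*} (s : Finset α) (hs : ((s.card : ℕ) : ℝ) ≠ 0) (f : α → ℝ) :
    fvar s f = (∑ a ∈ s, (f a)^2) / (s.card : ℝ) - ((∑ a ∈ s, f a) / (s.card : ℝ))^2 := by
  unfold fvar uexp
  have hexp : ∑ a ∈ s, (f a - (∑ b ∈ s, f b) / (s.card : ℝ))^2
      = ∑ a ∈ s, (f a)^2 - 2 * ((∑ b ∈ s, f b) / (s.card : ℝ)) * (∑ b ∈ s, f b)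
        + (s.card : ℝ) * ((∑ b ∈ s, f b) / (s.card : ℝ))^2 := by
    have e1 : ∀ a : α, (f a - (∑ b ∈ s, f b) / ((s.card : ℕ) : ℝ))^2
        = (f a)^2 - 2 * ((∑ b ∈ s, f b) / ((s.card : ℕ) : ℝ)) * f a
          + ((∑ b ∈ s, f b) / ((s.card : ℕ) : ℝ))^2 := fun a => by ring
    rw [Finset.sum_congr rfl (fun a _ => e1 a), Finset.sum_add_distrib,
      Finset.sum_sub_distrib, ← Finset.mul_sum, Finset.sum_const, nsmul_eq_mul]
  rw [hexp]
  field_simp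
  ring

/-- under the uniform distribution on `Π(m)`, the variance of
`W = W_y - W_x` equals the sum of the variances of its two exchange sums. -/
theorem W_diff_var (nx ny : ℕ) (hx : 2 ≤ nx) (hy : 2 ≤ ny)
    (x : Fin nx → ℝ) (y : Fin ny → ℝ)
    (m : ℕ) (hm1 : 1 ≤ m) (hm : m ≤ min nx ny) :
    fvar (PartM nx ny m) (fun π => Wy nx ny y π - Wx nx ny x π)
        = (m : ℝ) * (((ny : ℝ) - m) / (((ny : ℝ) - 1) * ny))
            * (∑ j, (y j - (∑ k, y k) / ny) ^ 2)
          + (m : ℝ) * (((nx : ℝ) - m) / (((nx : ℝ) - 1) * nx))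
            * (∑ i, (x i - (∑ k, x k) / nx) ^ 2)
    ∧ fvar (PartM nx ny m) (fun π => Wy nx ny y π - Wx nx ny x π)
        = fvar (PartM nx ny m) (Wy nx ny y) + fvar (PartM nx ny m) (Wx nx ny x) := by
    classical
  have hmx : m ≤ nx := hm.trans (min_le_left nx ny)
  have hmy : m ≤ ny := hm.trans (min_le_right nx ny)
  have hWy : ∀ π : Equiv.Perm (Fin (nx + ny)), Wy nx ny y π = ∑ j ∈ Bset nx ny π, y j := by
    intro π
    simp [Wy, deltaY, Bset, Finset.sum_filter, ite_mul]
  have hWx : ∀ π : Equiv.Perm (Fin (nx + ny)), Wx nx ny x π = ∑ i ∈ Aset nx ny π, x i := by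
    intro π
    simp [Wx, deltaX, Aset, Finset.sum_filter, ite_mul]
  have hPx : ((Finset.powersetCard m (univ : Finset (Fin nx))).card : ℝ)
      = ((nx.choose m : ℕ) : ℝ) := by
    rw [Finset.card_powersetCard, Finset.card_univ, Fintype.card_fin]
  have hPy : ((Finset.powersetCard m (univ : Finset (Fin ny))).card : ℝ)
      = ((ny.choose m : ℕ) : ℝ) := by
    rw [Finset.card_powersetCard, Finset.card_univ, Fintype.card_fin]
  -- abbreviations (as plain terms)
  -- moments
  have h0 : (((PartM nx ny m).card : ℕ) : ℝ)
      = ((Nat.factorial nx * Nat.factorial ny : ℕ) : ℝ)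
        * (((nx.choose m : ℕ) : ℝ) * ((ny.choose m : ℕ) : ℝ)) := by
    have h := key_sum nx ny m hmx (fun _ _ => (1:ℝ))
    simp only [Finset.sum_const, nsmul_eq_mul, mul_one] at h
    rw [hPx, hPy] at h
    exact h
  have h3 : ∑ π ∈ PartM nx ny m, Wy nx ny y π
      = ((Nat.factorial nx * Nat.factorial ny : ℕ) : ℝ)
        * (((nx.choose m : ℕ) : ℝ)
            * ∑ B ∈ Finset.powersetCard m (univ : Finset (Fin ny)), ∑ j ∈ B, y j) := by
    have h := key_sum nx ny m hmx (fun _ B => ∑ j ∈ B, y j)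
    simp only [Finset.sum_const, nsmul_eq_mul] at h
    rw [hPx] at h
    rw [Finset.sum_congr rfl (fun π _ => hWy π)]
    exact h
  have h4 : ∑ π ∈ PartM nx ny m, (Wy nx ny y π)^2
      = ((Nat.factorial nx * Nat.factorial ny : ℕ) : ℝ)
        * (((nx.choose m : ℕ) : ℝ)
            * ∑ B ∈ Finset.powersetCard m (univ : Finset (Fin ny)), (∑ j ∈ B, y j)^2) := by
    have h := key_sum nx ny m hmx (fun _ B => (∑ j ∈ B, y j)^2)
    simp only [Finset.sum_const, nsmul_eq_mul] at h
    rw [hPx] at h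
    rw [Finset.sum_congr rfl (fun π (_ : π ∈ PartM nx ny m) => by rw [hWy π])]
    exact h
  have h5 : ∑ π ∈ PartM nx ny m, Wx nx ny x π
      = ((Nat.factorial nx * Nat.factorial ny : ℕ) : ℝ)
        * (((ny.choose m : ℕ) : ℝ)
            * ∑ A ∈ Finset.powersetCard m (univ : Finset (Fin nx)), ∑ i ∈ A, x i) := by
    have h := key_sum nx ny m hmx (fun A _ => ∑ i ∈ A, x i)
    simp only [Finset.sum_const, nsmul_eq_mul] at h
    rw [hPy, ← Finset.mul_sum, Finset.mul_sum] at h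
    rw [Finset.sum_congr rfl (fun π _ => hWx π)]
    rw [h, ← Finset.mul_sum]
  have h6 : ∑ π ∈ PartM nx ny m, (Wx nx ny x π)^2
      = ((Nat.factorial nx * Nat.factorial ny : ℕ) : ℝ)
        * (((ny.choose m : ℕ) : ℝ)
            * ∑ A ∈ Finset.powersetCard m (univ : Finset (Fin nx)), (∑ i ∈ A, x i)^2) := by
    have h := key_sum nx ny m hmx (fun A _ => (∑ i ∈ A, x i)^2)
    simp only [Finset.sum_const, nsmul_eq_mul] at h
    rw [hPy, ← Finset.mul_sum, Finset.mul_sum] at h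
    rw [Finset.sum_congr rfl (fun π (_ : π ∈ PartM nx ny m) => by rw [hWx π])]
    rw [h, ← Finset.mul_sum]
  have hc : ∑ π ∈ PartM nx ny m, Wx nx ny x π * Wy nx ny y π
      = ((Nat.factorial nx * Nat.factorial ny : ℕ) : ℝ)
        * ((∑ A ∈ Finset.powersetCard m (univ : Finset (Fin nx)), ∑ i ∈ A, x i)
            * (∑ B ∈ Finset.powersetCard m (univ : Finset (Fin ny)), ∑ j ∈ B, y j)) := by
    have h := key_sum nx ny m hmx
      (fun A B => (∑ i ∈ A, x i) * (∑ j ∈ B, y j))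
    rw [← Finset.sum_mul_sum] at h
    rw [Finset.sum_congr rfl (fun π (_ : π ∈ PartM nx ny m) => by rw [hWx π, hWy π])]
    exact h
  -- nonzero constants
  have hK0 : ((Nat.factorial nx * Nat.factorial ny : ℕ) : ℝ) ≠ 0 := by
    have := Nat.factorial_pos nx
    have := Nat.factorial_pos ny
    positivity
  have hCA0 : ((nx.choose m : ℕ) : ℝ) ≠ 0 := by
    have := Nat.choose_pos hmx
    positivity
  have hCB0 : ((ny.choose m : ℕ) : ℝ) ≠ 0 := by
    have := Nat.choose_pos hmy
    positivity
  have hcard0 : (((PartM nx ny m).card : ℕ) : ℝ) ≠ 0 := by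
    rw [h0]
    exact mul_ne_zero hK0 (mul_ne_zero hCA0 hCB0)
  -- difference sums
  have hW1 : ∑ π ∈ PartM nx ny m, (Wy nx ny y π - Wx nx ny x π)
      = (∑ π ∈ PartM nx ny m, Wy nx ny y π) - ∑ π ∈ PartM nx ny m, Wx nx ny x π :=
    Finset.sum_sub_distrib _ _
  have hW2 : ∑ π ∈ PartM nx ny m, (Wy nx ny y π - Wx nx ny x π)^2
      = (∑ π ∈ PartM nx ny m, (Wy nx ny y π)^2)
        - 2 * (∑ π ∈ PartM nx ny m, Wx nx ny x π * Wy nx ny y π)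
        + ∑ π ∈ PartM nx ny m, (Wx nx ny x π)^2 := by
    have e : ∀ π : Equiv.Perm (Fin (nx + ny)),
        (Wy nx ny y π - Wx nx ny x π)^2
        = (Wy nx ny y π)^2 - 2 * (Wx nx ny x π * Wy nx ny y π) + (Wx nx ny x π)^2 :=
      fun π => by ring
    rw [Finset.sum_congr rfl (fun π _ => e π), Finset.sum_add_distrib,
      Finset.sum_sub_distrib, ← Finset.mul_sum]
  -- variances via moments
  have key2 : fvar (PartM nx ny m) (Wy nx ny y)
      = (∑ B ∈ Finset.powersetCard m (univ : Finset (Fin ny)), (∑ j ∈ B, y j)^2)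
          / ((ny.choose m : ℕ) : ℝ)
        - ((∑ B ∈ Finset.powersetCard m (univ : Finset (Fin ny)), ∑ j ∈ B, y j)
          / ((ny.choose m : ℕ) : ℝ))^2 := by
    rw [fvar_moments _ hcard0, h4, h3, h0]
    field_simp
  have key3 : fvar (PartM nx ny m) (Wx nx ny x)
      = (∑ A ∈ Finset.powersetCard m (univ : Finset (Fin nx)), (∑ i ∈ A, x i)^2)
          / ((nx.choose m : ℕ) : ℝ)
        - ((∑ A ∈ Finset.powersetCard m (univ : Finset (Fin nx)), ∑ i ∈ A, x i)
          / ((nx.choose m : ℕ) : ℝ))^2 := by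
    rw [fvar_moments _ hcard0, h6, h5, h0]
    field_simp
  have key1 : fvar (PartM nx ny m) (fun π => Wy nx ny y π - Wx nx ny x π)
      = ((∑ B ∈ Finset.powersetCard m (univ : Finset (Fin ny)), (∑ j ∈ B, y j)^2)
          / ((ny.choose m : ℕ) : ℝ)
        - ((∑ B ∈ Finset.powersetCard m (univ : Finset (Fin ny)), ∑ j ∈ B, y j)
          / ((ny.choose m : ℕ) : ℝ))^2)
      + ((∑ A ∈ Finset.powersetCard m (univ : Finset (Fin nx)), (∑ i ∈ A, x i)^2)
          / ((nx.choose m : ℕ) : ℝ)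
        - ((∑ A ∈ Finset.powersetCard m (univ : Finset (Fin nx)), ∑ i ∈ A, x i)
          / ((nx.choose m : ℕ) : ℝ))^2) := by
    rw [fvar_moments _ hcard0]
    rw [hW2, hW1, h3, h5, h6, h4, hc, h0]
    field_simp
    ring
  constructor
  · rw [key1, subset_var ny m hy hm1 hmy y, subset_var nx m hx hm1 hmx x]
  · rw [key1, key2, key3]
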